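/- For a simple, strongly connected, finite weighted directed graph and distinct vertices x, y, and all ε ∈ (0,1], one has κ_ε(x,y)/ε ≤ ℋ(x,y)/d(x,y), where ℋ(x,y) = −(ℋ_x + ←ℋ_y) is the mixed asymptotic mean curvature. -/

import Mathlib

open Finset Filter Topology MeasureTheory
open scoped Classical

noncomputable section

variable {V : Type*}

/-- Vertex weight `μ(x) = Σ_y μ_{xy}`. -/
def vdeg [Fintype V] (μ : V → V → ℝ) (x : V) : ℝ := ∑ y, μ x y

/-- Transition probability kernel `P(x,y) = μ_{xy}/μ(x)`. -/
def transP [Fintype V] (μ : V → V → ℝ) (x y : V) : ℝ := μ x y / vdeg μ x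

/-- `m` is the Perron measure of `(V,μ)`. -/
def IsPerron [Fintype V] (μ : V → V → ℝ) (m : V → ℝ) : Prop :=
  (∀ x, 0 < m x) ∧ (∑ x, m x = 1) ∧ ∀ x, m x = ∑ y, m y * transP μ y x

/-- Mean transition probability kernel `𝒫 = (P + ←P)/2`. -/
def meanK [Fintype V] (μ : V → V → ℝ) (m : V → ℝ) (x y : V) : ℝ :=
  (transP μ x y + m y / m x * transP μ y x) / 2

/-- There is a directed path of length `n` from `x` to `y`. -/
def HasPathLen (μ : V → V → ℝ) (x y : V) (n : ℕ) : Prop :=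
  ∃ c : ℕ → V, c 0 = x ∧ c n = y ∧ ∀ i < n, 0 < μ (c i) (c (i + 1))

/-- The (non-symmetric) graph distance. -/
def gdist (μ : V → V → ℝ) (x y : V) : ℝ :=
  sInf {r : ℝ | ∃ n : ℕ, (r : ℝ) = (n : ℝ) ∧ HasPathLen μ x y n}

/-- The graph is simple: no loops. -/
def IsSimpleW (μ : V → V → ℝ) : Prop := ∀ x, μ x x = 0

/-- The edge weight is nonnegative. -/
def Nonneg (μ : V → V → ℝ) : Prop := ∀ x y, 0 ≤ μ x y

/-- The graph is strongly connected. -/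
def StronglyConnectedW (μ : V → V → ℝ) : Prop := ∀ x y, ∃ n, HasPathLen μ x y n

/-- `π` is a coupling of the probability measures `ν₀, ν₁`. -/
def IsCoupling [Fintype V] (π : V → V → ℝ) (ν₀ ν₁ : V → ℝ) : Prop :=
  (∀ x y, 0 ≤ π x y) ∧ (∀ x, ∑ y, π x y = ν₀ x) ∧ (∀ y, ∑ x, π x y = ν₁ y)

/-- The L¹-Wasserstein distance with cost `d`. -/
def Wass [Fintype V] (d : V → V → ℝ) (ν₀ ν₁ : V → ℝ) : ℝ :=
  sInf {c : ℝ | ∃ π, IsCoupling π ν₀ ν₁ ∧ c = ∑ x, ∑ y, d x y * π x y}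

/-- The probability measure `ν^ε_x`. -/
def nu [Fintype V] (P : V → V → ℝ) (ε : ℝ) (x z : V) : ℝ :=
  if z = x then 1 - ε else ε * P x z

/-- `κ_ε(x,y) = 1 − W(ν^ε_x, ν^ε_y)/d(x,y)`. -/
def kappaEps [Fintype V] (μ : V → V → ℝ) (m : V → ℝ) (ε : ℝ) (x y : V) : ℝ :=
  1 - Wass (gdist μ) (nu (meanK μ m) ε x) (nu (meanK μ m) ε y) / gdist μ x y

/-- The (positive) Chung Laplacian associated with a kernel `P`. -/
def chungL [Fintype V] (P : V → V → ℝ) (f : V → ℝ) (x : V) : ℝ :=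
  f x - ∑ y, P x y * f y

/-- The negative Laplacian `Δ = −ℒ`. -/
def negL [Fintype V] (P : V → V → ℝ) (f : V → ℝ) (x : V) : ℝ :=
  (∑ y, P x y * f y) - f x

/-- `f` is 1-Lipschitz with respect to the non-symmetric distance `d`. -/
def Lip1 (d : V → V → ℝ) (f : V → ℝ) : Prop := ∀ x y, f y - f x ≤ d x y

/-- The asymptotic mean curvature `ℋ_x = ℒρ_x(x)`. -/
def Hout [Fintype V] (μ : V → V → ℝ) (m : V → ℝ) (x : V) : ℝ :=
  chungL (meanK μ m) (fun y => gdist μ x y) x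

/-- The reverse asymptotic mean curvature `←ℋ_x = ℒ←ρ_x(x)`. -/
def Hin [Fintype V] (μ : V → V → ℝ) (m : V → ℝ) (x : V) : ℝ :=
  chungL (meanK μ m) (fun y => gdist μ y x) x

/-- The mixed asymptotic mean curvature `ℋ(x,y) = −(ℋ_x + ←ℋ_y)`. -/
def Hmix [Fintype V] (μ : V → V → ℝ) (m : V → ℝ) (x y : V) : ℝ :=
  -(Hout μ m x + Hin μ m y)

/-- The neighborhood `𝒩_x = N_x ∪ ←N_x`. -/
def nbr [Fintype V] (μ : V → V → ℝ) (x : V) : Finset V :=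
  Finset.univ.filter (fun y => 0 < μ x y ∨ 0 < μ y x)

section AuxLemmas

variable {V : Type*}

lemma hasPathLen_trans {μ : V → V → ℝ} {x y z : V} {n m : ℕ}
    (h1 : HasPathLen μ x y n) (h2 : HasPathLen μ y z m) :
    HasPathLen μ x z (n + m) := by
  obtain ⟨c1, hc10, hc1n, hc1e⟩ := h1
  obtain ⟨c2, hc20, hc2m, hc2e⟩ := h2
  refine ⟨fun i => if i ≤ n then c1 i else c2 (i - n), by simp [hc10], ?_, ?_⟩
  · rcases Nat.eq_zero_or_pos m with hm | hm
    · subst hm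
      simp only [Nat.add_zero, le_refl, if_pos]
      rw [hc1n, ← hc20, hc2m]
    · have h1' : ¬ (n + m ≤ n) := by omega
      simp only [if_neg h1', Nat.add_sub_cancel_left, hc2m]
  · intro i hi
    dsimp only
    have key : ∀ j, n ≤ j → (if j ≤ n then c1 j else c2 (j - n)) = c2 (j - n) := by
      intro j hj
      rcases eq_or_lt_of_le hj with h | h
      · rw [← h]
        simp only [le_refl, if_pos, Nat.sub_self]
        rw [hc1n, hc20]
      · rw [if_neg (by omega)]
    by_cases h : i + 1 ≤ n
    · rw [if_pos (by omega), if_pos h]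
      exact hc1e i (by omega)
    · have hn : n ≤ i := by omega
      rw [key i hn, key (i+1) (by omega)]
      have he : i + 1 - n = (i - n) + 1 := by omega
      rw [he]
      exact hc2e (i - n) (by omega)

lemma gdist_spec {μ : V → V → ℝ} (hconn : StronglyConnectedW μ) (x y : V) :
    ∃ n : ℕ, gdist μ x y = n ∧ HasPathLen μ x y n ∧ ∀ k, HasPathLen μ x y k → n ≤ k := by
  have hS : {n : ℕ | HasPathLen μ x y n}.Nonempty := hconn x y
  have hmem := Nat.sInf_mem hS
  refine ⟨sInf {n : ℕ | HasPathLen μ x y n}, ?_, hmem, fun k hk => Nat.sInf_le hk⟩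
  apply IsLeast.csInf_eq
  constructor
  · exact ⟨_, rfl, hmem⟩
  · rintro r ⟨n, rfl, hn⟩
    exact_mod_cast Nat.sInf_le hn

lemma gdist_self' {μ : V → V → ℝ} (hconn : StronglyConnectedW μ) (x : V) :
    gdist μ x x = 0 := by
  obtain ⟨n, hg, _, hmin⟩ := gdist_spec hconn x x
  have h0 : HasPathLen μ x x 0 := ⟨fun _ => x, rfl, rfl, by omega⟩
  have := hmin 0 h0
  rw [hg]
  simp [Nat.le_zero.mp this]

lemma gdist_pos' {μ : V → V → ℝ} (hconn : StronglyConnectedW μ) {x y : V} (hxy : x ≠ y) :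
    0 < gdist μ x y := by
  obtain ⟨n, hg, ⟨c, hc0, hcn, _⟩, _⟩ := gdist_spec hconn x y
  have hn : n ≠ 0 := by
    rintro rfl
    exact hxy (hc0 ▸ hcn ▸ rfl)
  rw [hg]
  exact_mod_cast Nat.pos_of_ne_zero hn

lemma gdist_triangle' {μ : V → V → ℝ} (hconn : StronglyConnectedW μ) (x y z : V) :
    gdist μ x z ≤ gdist μ x y + gdist μ y z := by
  obtain ⟨n1, hg1, hp1, _⟩ := gdist_spec hconn x y
  obtain ⟨n2, hg2, hp2, _⟩ := gdist_spec hconn y z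
  obtain ⟨n3, hg3, _, hmin3⟩ := gdist_spec hconn x z
  have := hmin3 (n1 + n2) (hasPathLen_trans hp1 hp2)
  rw [hg1, hg2, hg3, ← Nat.cast_add]
  exact_mod_cast this

end AuxLemmas

/-- `κ_ε(x,y)/ε ≤ ℋ(x,y)/d(x,y)`. -/
theorem kappaEps_div_le_Hmix
    {V : Type*} [Fintype V] (μ : V → V → ℝ) (m : V → ℝ)
    (hnn : Nonneg μ) (hsimple : IsSimpleW μ) (hconn : StronglyConnectedW μ)
    (hm : IsPerron μ m) (x y : V) (hxy : x ≠ y)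
    (ε : ℝ) (hε : ε ∈ Set.Ioc (0:ℝ) 1) :
    kappaEps μ m ε x y / ε ≤ Hmix μ m x y / gdist μ x y := by
  obtain ⟨hε0, hε1⟩ := hε
  obtain ⟨hmpos, hmsum, hmfix⟩ := hm
  -- vertex degrees are positive
  have hvd : ∀ a, 0 < vdeg μ a := by
    intro a
    have hab : ∃ b, a ≠ b := by
      by_cases h : a = x
      · exact ⟨y, h ▸ hxy⟩
      · exact ⟨x, h⟩
    obtain ⟨b, hab⟩ := hab
    obtain ⟨n, c, hc0, hcn, hce⟩ := hconn a b
    have hn : n ≠ 0 := by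
      rintro rfl
      exact hab (hc0 ▸ hcn ▸ rfl)
    have hpos : 0 < μ a (c 1) := by
      have := hce 0 (Nat.pos_of_ne_zero hn)
      rwa [hc0] at this
    exact Finset.sum_pos' (fun z _ => hnn a z) ⟨c 1, Finset.mem_univ _, hpos⟩
  have hPnn : ∀ a z, 0 ≤ transP μ a z := fun a z =>
    div_nonneg (hnn a z) (hvd a).le
  have hKnn : ∀ a z, 0 ≤ meanK μ m a z := by
    intro a z
    unfold meanK
    have h1 := hPnn a z
    have h2 := hPnn z a
    have h3 : 0 ≤ m z / m a := div_nonneg (hmpos z).le (hmpos a).le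
    positivity
  have hPsum : ∀ a, ∑ z, transP μ a z = 1 := by
    intro a
    unfold transP
    rw [← Finset.sum_div]
    exact div_self (hvd a).ne'
  have hKsum : ∀ a, ∑ z, meanK μ m a z = 1 := by
    intro a
    unfold meanK
    rw [← Finset.sum_div]
    have h2 : ∑ z, (transP μ a z + m z / m a * transP μ z a) = 2 := by
      rw [Finset.sum_add_distrib, hPsum]
      have he : ∑ z, m z / m a * transP μ z a = (∑ z, m z * transP μ z a) / m a := by
        rw [Finset.sum_div]
        exact Finset.sum_congr rfl fun z _ => by ring
      rw [he, ← hmfix a, div_self (hmpos a).ne']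
      norm_num
    rw [h2]
    norm_num
  have hKdiag : ∀ a, meanK μ m a a = 0 := by
    intro a
    unfold meanK transP
    rw [hsimple a]
    simp
  -- rewriting nu
  have hnu : ∀ a b, nu (meanK μ m) ε a b = (if b = a then 1 - ε else 0) + ε * meanK μ m a b := by
    intro a b
    unfold nu
    by_cases h : b = a
    · subst h
      rw [hKdiag]
      simp
    · simp [h]
  have hnunn : ∀ a b, 0 ≤ nu (meanK μ m) ε a b := by
    intro a b
    unfold nu
    by_cases h : b = a
    · simp [h]; linarith
    · simp [h]
      exact mul_nonneg hε0.le (hKnn a b)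
  have hnusum : ∀ a, ∑ b, nu (meanK μ m) ε a b = 1 := by
    intro a
    simp only [hnu]
    rw [Finset.sum_add_distrib, Finset.sum_ite_eq' Finset.univ a (fun _ => 1 - ε),
      ← Finset.mul_sum, hKsum]
    simp
  have hint : ∀ (f : V → ℝ) a,
      ∑ b, f b * nu (meanK μ m) ε a b = (1 - ε) * f a + ε * ∑ b, meanK μ m a b * f b := by
    intro f a
    simp only [hnu, mul_add]
    rw [Finset.sum_add_distrib]
    congr 1
    · have : ∀ b, f b * (if b = a then 1 - ε else 0) = (if b = a then (1 - ε) * f b else 0) := by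
        intro b
        by_cases h : b = a <;> simp [h] <;> ring
      simp only [this]
      rw [Finset.sum_ite_eq' Finset.univ a (fun b => (1 - ε) * f b)]
      simp
    · rw [Finset.mul_sum]
      exact Finset.sum_congr rfl fun b _ => by ring
  -- existence of a coupling
  have hcoup : ∃ π, IsCoupling π (nu (meanK μ m) ε x) (nu (meanK μ m) ε y) := by
    refine ⟨fun a b => nu (meanK μ m) ε x a * nu (meanK μ m) ε y b,
      fun a b => mul_nonneg (hnunn x a) (hnunn y b), ?_, ?_⟩
    · intro a
      rw [← Finset.mul_sum, hnusum y, mul_one]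
    · intro b
      rw [← Finset.sum_mul, hnusum x, one_mul]
  have htri : ∀ a b c : V, gdist μ a c ≤ gdist μ a b + gdist μ b c := gdist_triangle' hconn
  have hd0 : ∀ a : V, gdist μ a a = 0 := gdist_self' hconn
  have hDpos : 0 < gdist μ x y := gdist_pos' hconn hxy
  set f : V → ℝ := fun z => gdist μ x z with hf
  -- Kantorovich lower bound
  have hW : (∑ b, f b * nu (meanK μ m) ε y b) - (∑ a, f a * nu (meanK μ m) ε x a)
      ≤ Wass (gdist μ) (nu (meanK μ m) ε x) (nu (meanK μ m) ε y) := by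
    apply le_csInf
    · obtain ⟨π, hπ⟩ := hcoup
      exact ⟨_, π, hπ, rfl⟩
    rintro c ⟨π, ⟨hpos, h0, h1⟩, rfl⟩
    have key : ∑ a, ∑ b, (f b - f a) * π a b ≤ ∑ a, ∑ b, gdist μ a b * π a b := by
      refine Finset.sum_le_sum fun a _ => Finset.sum_le_sum fun b _ => ?_
      refine mul_le_mul_of_nonneg_right ?_ (hpos a b)
      have := htri x a b
      simp only [hf]
      linarith
    have e1 : ∑ a, ∑ b, (f b - f a) * π a b
        = (∑ b, f b * nu (meanK μ m) ε y b) - (∑ a, f a * nu (meanK μ m) ε x a) := by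
      have t1 : ∑ a, ∑ b, f b * π a b = ∑ b, f b * nu (meanK μ m) ε y b := by
        rw [Finset.sum_comm]
        refine Finset.sum_congr rfl fun b _ => ?_
        rw [← Finset.mul_sum, h1 b]
      have t2 : ∑ a, ∑ b, f a * π a b = ∑ a, f a * nu (meanK μ m) ε x a := by
        refine Finset.sum_congr rfl fun a _ => ?_
        rw [← Finset.mul_sum, h0 a]
      simp only [sub_mul]
      rw [Finset.sum_congr rfl (fun a _ => Finset.sum_sub_distrib _ _), Finset.sum_sub_distrib, t1, t2]
    linarith [key, e1 ▸ key]
  -- lower bound on ∑ K y b * f b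
  have h2 : gdist μ x y - ∑ b, meanK μ m y b * gdist μ b y ≤ ∑ b, meanK μ m y b * f b := by
    have hle : ∑ b, meanK μ m y b * (gdist μ x y - gdist μ b y) ≤ ∑ b, meanK μ m y b * f b := by
      refine Finset.sum_le_sum fun b _ => ?_
      refine mul_le_mul_of_nonneg_left ?_ (hKnn y b)
      have := htri x b y
      simp only [hf]
      linarith
    have heq : ∑ b, meanK μ m y b * (gdist μ x y - gdist μ b y)
        = gdist μ x y - ∑ b, meanK μ m y b * gdist μ b y := by
      simp only [mul_sub]
      rw [Finset.sum_sub_distrib, ← Finset.sum_mul, hKsum, one_mul]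
    linarith
  -- Hmix formula
  have hHmix : Hmix μ m x y
      = (∑ a, meanK μ m x a * gdist μ x a) + (∑ b, meanK μ m y b * gdist μ b y) := by
    unfold Hmix Hout Hin chungL
    simp only [hd0 x, hd0 y]
    ring
  -- core estimate:  D − ε·Hmix ≤ W
  have hcore : gdist μ x y - ε * Hmix μ m x y
      ≤ Wass (gdist μ) (nu (meanK μ m) ε x) (nu (meanK μ m) ε y) := by
    refine le_trans ?_ hW
    rw [hint f y, hint f x, hHmix]
    have hfx : f x = 0 := hd0 x
    have hfy : f y = gdist μ x y := rfl
    rw [hfx, hfy]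
    nlinarith [h2, hε0.le]
  -- conclude
  have hκ : kappaEps μ m ε x y ≤ ε * (Hmix μ m x y / gdist μ x y) := by
    unfold kappaEps
    have h1 : (gdist μ x y - ε * Hmix μ m x y) / gdist μ x y
        ≤ Wass (gdist μ) (nu (meanK μ m) ε x) (nu (meanK μ m) ε y) / gdist μ x y :=
      (div_le_div_iff_of_pos_right hDpos).mpr hcore
    have h2' : (gdist μ x y - ε * Hmix μ m x y) / gdist μ x y
        = 1 - ε * (Hmix μ m x y / gdist μ x y) := by
      field_simp
    linarith [h2' ▸ h1]
  rw [div_le_iff₀ hε0]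
  calc kappaEps μ m ε x y ≤ ε * (Hmix μ m x y / gdist μ x y) := hκ
    _ = Hmix μ m x y / gdist μ x y * ε := by ring
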